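/- Let n ≥ 1, let S ⊆ ℝⁿ be a nonempty closed set, and let x ∉ S. If the distance function z ↦ dist(z, S) has a gradient g at x (i.e., it is Fréchet differentiable at x with gradient g), then ‖g‖ = 1 and the point y = x − dist(x, S)·g lies in S and satisfies ‖x − y‖ = dist(x, S); in particular, y is a closest point of S to x. -/

import Mathlib

open Metric Topology

/-- If the distance function to a nonempty closed set `S ⊆ ℝⁿ` has a gradient `g` at a
point `x ∉ S`, then `‖g‖ = 1` and `y = x − dist(x,S)·g` is a closest point of `S` to `x`. -/
theorem gradient_distance_closest_point {n : ℕ} (hn : 1 ≤ n)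
    (S : Set (EuclideanSpace ℝ (Fin n))) (hS : S.Nonempty) (hSc : IsClosed S)
    (x : EuclideanSpace ℝ (Fin n)) (hx : x ∉ S)
    (g : EuclideanSpace ℝ (Fin n))
    (hg : HasGradientAt (fun z => infDist z S) g x) :
    ‖g‖ = 1 ∧ (x - infDist x S • g) ∈ S ∧
      ‖x - (x - infDist x S • g)‖ = infDist x S := by
  set f : EuclideanSpace ℝ (Fin n) → ℝ := fun z => infDist z S with hf
  set d : ℝ := infDist x S with hd
  have hd0 : 0 < d := (hSc.notMem_iff_infDist_pos hS).1 hx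
  obtain ⟨s, hsS, hds⟩ := hSc.exists_infDist_eq_dist hS x
  set u : EuclideanSpace ℝ (Fin n) := d⁻¹ • (x - s) with hu
  have hxs : ‖x - s‖ = d := by rw [← dist_eq_norm, ← hds]
  have hune : ‖u‖ = 1 := by
    rw [hu, norm_smul, hxs, norm_inv, Real.norm_eq_abs, abs_of_pos hd0,
      inv_mul_cancel₀ hd0.ne']
  have hdu : d • u = x - s := by
    rw [hu, smul_smul, mul_inv_cancel₀ hd0.ne', one_smul]
  -- value of f along the segment from x towards s
  have key : ∀ t ∈ Set.Icc (0:ℝ) d, f (x - t • u) = d - t := by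
    intro t ht
    have hx' : x - t • u - s = (d - t) • u := by rw [sub_smul, hdu]; abel
    have h1 : f (x - t • u) ≤ d - t := by
      calc f (x - t • u) ≤ dist (x - t • u) s := infDist_le_dist_of_mem hsS
        _ = ‖x - t • u - s‖ := dist_eq_norm _ _
        _ = d - t := by
            rw [hx', norm_smul, hune, mul_one, Real.norm_eq_abs,
              abs_of_nonneg (by linarith [ht.2])]
    have h2 : d - t ≤ f (x - t • u) := by
      have h3 : infDist x S ≤ infDist (x - t • u) S + dist x (x - t • u) :=
        infDist_le_infDist_add_dist
      have h4 : dist x (x - t • u) = t := by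
        rw [dist_eq_norm, sub_sub_cancel, norm_smul, hune, mul_one,
          Real.norm_eq_abs, abs_of_nonneg ht.1]
      simp only [hf, ← hd] at h3 ⊢
      linarith [h3, h4.symm ▸ h3]
    linarith
  -- derivative of f along the line t ↦ x - t • u
  have hγ : HasDerivAt (fun t : ℝ => x - t • u) (-((1:ℝ) • u)) 0 :=
    ((hasDerivAt_id (0:ℝ)).smul_const u).const_sub x
  have hcomp : HasDerivAt (fun t : ℝ => f (x - t • u))
      ((InnerProductSpace.toDual ℝ _ g) (-((1:ℝ) • u))) 0 :=
    by
      have hg' : HasFDerivAt f ((InnerProductSpace.toDual ℝ _) g) (x - (0:ℝ) • u) := by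
        simpa using hg.hasFDerivAt
      exact hg'.comp_hasDerivAt 0 hγ
  have hval : (InnerProductSpace.toDual ℝ _ g) (-((1:ℝ) • u)) = -(inner ℝ g u : ℝ) := by
    simp [InnerProductSpace.toDual_apply_apply, inner_neg_right]
  rw [hval] at hcomp
  -- slope along (0, d] is -1
  have hslope : Filter.Tendsto (slope (fun t : ℝ => f (x - t • u)) 0) (𝓝[>] 0)
      (𝓝 (-(inner ℝ g u : ℝ))) :=
    (hasDerivAt_iff_tendsto_slope.1 hcomp).mono_left
      (nhdsWithin_mono _ fun t ht => ne_of_gt ht)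
  have hev : ∀ᶠ t in 𝓝[>] (0:ℝ), slope (fun t : ℝ => f (x - t • u)) 0 t = -1 := by
    filter_upwards [Ioc_mem_nhdsGT hd0] with t ht
    have h0 : f (x - (0:ℝ) • u) = d - 0 := key 0 ⟨le_refl 0, hd0.le⟩
    have h1 : f (x - t • u) = d - t := key t ⟨ht.1.le, ht.2⟩
    rw [slope_def_field, h0, h1]
    rw [div_eq_iff (by simpa using ht.1.ne' : t - 0 ≠ 0)]
    ring
  have hinner : -(inner ℝ g u : ℝ) = -1 :=
    tendsto_nhds_unique hslope (tendsto_const_nhds.congr' (hev.mono fun t h => h.symm))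
  have hgu : (inner ℝ g u : ℝ) = 1 := by linarith
  -- ‖g‖ ≤ 1 from Lipschitzness
  have hle : ‖g‖ ≤ 1 := by
    have h := hg.hasFDerivAt.le_of_lipschitzOn Filter.univ_mem
      (lipschitz_infDist_pt S).lipschitzOnWith
    rwa [(InnerProductSpace.toDual ℝ _).norm_map] at h
  have hge : 1 ≤ ‖g‖ := by
    have := real_inner_le_norm g u
    rw [hgu, hune, mul_one] at this
    exact this
  have hgnorm : ‖g‖ = 1 := le_antisymm hle hge
  have hgeq : g = u := by
    have : (inner ℝ g u : ℝ) = ‖g‖ * ‖u‖ := by rw [hgnorm, hune, hgu, one_mul]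
    have h2 := inner_eq_norm_mul_iff_real.1 this
    rw [hgnorm, hune, one_smul, one_smul] at h2
    exact h2
  refine ⟨hgnorm, ?_, ?_⟩
  · rw [hgeq, hdu, sub_sub_cancel]; exact hsS
  · rw [hgeq, hdu, sub_sub_cancel]; exact hxs
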